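/- Let M be a symmetric positive definite real n×n matrix and K a symmetric real n×n matrix. Then there exist an invertible real n×n matrix T and a vector d : Fin n → ℝ such that Tᵀ * M * T = 1 and Tᵀ * K * T = Matrix.diagonal d; that is, the generalized eigenvalue problem K T = M T Λ admits a complete set of M-orthonormal eigenvectors. -/

import Mathlib

open Matrix

/-- Generalized eigendecomposition: for a symmetric positive definite `M` and a
symmetric `K`, there exist an invertible `T` and eigenvalues `d` such that
`Tᵀ * M * T = 1` and `Tᵀ * K * T = diagonal d`; that is, the generalized
eigenvalue problem `K T = M T Λ` admits a complete set of `M`-orthonormal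
eigenvectors. -/
theorem generalized_eigendecomposition_exists
    {n : ℕ} (M K : Matrix (Fin n) (Fin n) ℝ)
    (hM : M.PosDef) (hK : K.IsSymm) :
    ∃ (T : Matrix (Fin n) (Fin n) ℝ) (d : Fin n → ℝ),
      IsUnit T.det ∧ Tᵀ * M * T = 1 ∧ Tᵀ * K * T = Matrix.diagonal d := by
  open scoped MatrixOrder in set A := CFC.sqrt M with hAdef
  open scoped MatrixOrder in have hAA : A * A = M := CFC.sqrt_mul_sqrt_self M hM.posSemidef.nonneg
  have hAT : Aᵀ = A := by
    rw [← conjTranspose_eq_transpose_of_trivial]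
    open scoped MatrixOrder in exact (CFC.sqrt_nonneg M).posSemidef.isHermitian
  have hdetA : IsUnit A.det := by
    have h1 : A.det * A.det = M.det := by rw [← det_mul, hAA]
    have hMdet : M.det ≠ 0 := ne_of_gt hM.det_pos
    exact isUnit_iff_ne_zero.mpr (fun h => hMdet (by rw [← h1, h, zero_mul]))
  have hAinv : A⁻¹ * A = 1 := nonsing_inv_mul A hdetA
  have hAinv' : A * A⁻¹ = 1 := mul_nonsing_inv A hdetA
  have hAinvT : (A⁻¹)ᵀ = A⁻¹ := by rw [transpose_nonsing_inv, hAT]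
  set B := A⁻¹ * K * A⁻¹ with hBdef
  have hB : B.IsHermitian := by
    rw [IsHermitian, conjTranspose_eq_transpose_of_trivial, hBdef, transpose_mul, transpose_mul,
      hAinvT, hK.eq, mul_assoc]
  set U : Matrix (Fin n) (Fin n) ℝ := (hB.eigenvectorUnitary : Matrix (Fin n) (Fin n) ℝ) with hUdef
  have hUdiag : star U * B * U = diagonal (RCLike.ofReal ∘ hB.eigenvalues) :=
    (Unitary.conjStarAlgAut_star_apply _ _).symm.trans hB.conjStarAlgAut_star_eigenvectorUnitary
  have hUmem : U ∈ Matrix.unitaryGroup (Fin n) ℝ := hB.eigenvectorUnitary.2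
  have hstarU : star U = Uᵀ := by
    rw [show (star U : Matrix (Fin n) (Fin n) ℝ) = Uᴴ from rfl,
      conjTranspose_eq_transpose_of_trivial]
  have hUU : Uᵀ * U = 1 := by
    rw [← hstarU]; exact (Matrix.mem_unitaryGroup_iff').mp hUmem
  refine ⟨A⁻¹ * U, hB.eigenvalues, ?_, ?_, ?_⟩
  · have h1 : Uᵀ.det * U.det = 1 := by rw [← det_mul, hUU, det_one]
    rw [det_transpose] at h1
    have hdetAi : IsUnit (A⁻¹).det := by
      have : A.det * (A⁻¹).det = 1 := by rw [← det_mul, hAinv', det_one]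
      exact IsUnit.of_mul_eq_one _ (by rw [mul_comm]; exact this)
    rw [det_mul]
    exact hdetAi.mul (IsUnit.of_mul_eq_one _ h1)
  · rw [transpose_mul, hAinvT, ← hAA]
    have : Uᵀ * A⁻¹ * (A * A) * (A⁻¹ * U) = Uᵀ * (A⁻¹ * A) * ((A * A⁻¹) * U) := by
      simp only [Matrix.mul_assoc]
    rw [this, hAinv, hAinv', mul_one, one_mul, hUU]
  · rw [transpose_mul, hAinvT]
    have h2 : Uᵀ * A⁻¹ * K * (A⁻¹ * U) = star U * B * U := by
      rw [hstarU, hBdef]; simp only [Matrix.mul_assoc]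
    rw [h2, hUdiag]
    rfl
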